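/- arXiv:0711.0434 — 6 statements merged into one kernel-verified Lean document; each statement's English description precedes it below -/
import Mathlib

section
/- There exists a directed projective system of nonempty sets with surjective bonding maps whose projective limit is empty. -/
/-- There exists a directed projective system of nonempty sets with surjective
bonding maps whose projective limit is empty. -/
theorem stmt_2 :
    ∃ (D : Type) (r : D → D → Prop) (_ : Reflexive r) (htrans : Transitive r)
      (_ : ∀ d e : D, ∃ i, r d i ∧ r e i)
      (X : D → Type) (f : ∀ ⦃d e : D⦄, r d e → (X e → X d)),
        (∀ d (h : r d d), f h = id) ∧
        (∀ ⦃d e i : D⦄ (h₁ : r d e) (h₂ : r e i), f h₁ ∘ f h₂ = f (htrans h₁ h₂)) ∧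
        (∀ d, Nonempty (X d)) ∧
        (∀ ⦃d e : D⦄ (h : r d e), Function.Surjective (f h)) ∧
        IsEmpty {x : ∀ d, X d // ∀ ⦃d e : D⦄ (h : r d e), f h (x e) = x d} := by
  classical
  refine ⟨Finset ℝ, fun d e => d ⊆ e, fun d => Finset.Subset.refl d,
    fun _ _ _ h1 h2 => h1.trans h2,
    fun d e => ⟨d ∪ e, Finset.subset_union_left, Finset.subset_union_right⟩,
    fun d => {g : {x // x ∈ d} → ℕ // Function.Injective g},
    fun d e h g => ⟨fun x => g.1 ⟨x.1, h x.2⟩,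
      fun a b hab => Subtype.ext (by simpa using congrArg Subtype.val (g.2 hab))⟩,
    ?_, ?_, ?_, ?_, ?_⟩
  · intro d h; rfl
  · intro d e i h₁ h₂; rfl
  · intro d
    exact ⟨⟨fun x => (Fintype.equivFin {x // x ∈ d} x).val,
      fun a b hab => (Fintype.equivFin _).injective (Fin.val_injective hab)⟩⟩
  · intro d e h g
    set j : {x // x ∈ e} → ℕ := fun x => (Fintype.equivFin {x // x ∈ e} x).val with hj
    have hjinj : Function.Injective j :=
      fun a b hab => (Fintype.equivFin _).injective (Fin.val_injective hab)
    set m : ℕ := (Finset.univ.sup fun y : {x // x ∈ d} => g.1 y) + 1 with hm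
    have hlt : ∀ y : {x // x ∈ d}, g.1 y < m := by
      intro y
      exact Nat.lt_succ_of_le (Finset.le_sup (Finset.mem_univ y))
    refine ⟨⟨fun x => if hx : x.1 ∈ d then g.1 ⟨x.1, hx⟩ else m + j x, ?_⟩, ?_⟩
    · intro a b hab
      by_cases ha : a.1 ∈ d <;> by_cases hb : b.1 ∈ d
      · simp only [dif_pos ha, dif_pos hb] at hab
        exact Subtype.ext (by simpa using congrArg Subtype.val (g.2 hab))
      · simp only [dif_pos ha, dif_neg hb] at hab
        exact absurd hab (Nat.ne_of_lt (lt_of_lt_of_le (hlt _) (Nat.le_add_right _ _)))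
      · simp only [dif_neg ha, dif_pos hb] at hab
        exact absurd hab.symm (Nat.ne_of_lt (lt_of_lt_of_le (hlt _) (Nat.le_add_right _ _)))
      · simp only [dif_neg ha, dif_neg hb] at hab
        exact hjinj (Nat.add_left_cancel hab)
    · apply Subtype.ext
      funext x
      simp only [dif_pos x.2]
  · refine ⟨fun x => ?_⟩
    obtain ⟨x, hx⟩ := x
    set F : ℝ → ℕ := fun a => (x {a}).1 ⟨a, Finset.mem_singleton_self a⟩ with hF
    have hFinj : Function.Injective F := by
      intro a b hab
      have ha : ({a} : Finset ℝ) ⊆ {a, b} := by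
        intro t ht; simp at ht; simp [ht]
      have hb : ({b} : Finset ℝ) ⊆ {a, b} := by
        intro t ht; simp at ht; simp [ht]
      have h1 := hx ha
      have h2 := hx hb
      have e1 : F a = (x {a, b}).1 ⟨a, by simp⟩ :=
        (congrFun (congrArg Subtype.val h1) ⟨a, Finset.mem_singleton_self a⟩).symm
      have e2 : F b = (x {a, b}).1 ⟨b, by simp⟩ :=
        (congrFun (congrArg Subtype.val h2) ⟨b, Finset.mem_singleton_self b⟩).symm
      have h3 := (x {a, b}).2 (e1 ▸ e2 ▸ hab)
      have h4 := congrArg Subtype.val h3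
      simpa using h4
    exact absurd (Countable.of_equiv _ (Equiv.ofInjective F hFinj).symm)
      (not_countable (α := ℝ))
end

section
/- Let A be a complete linearly topologized ring such that A/I is Noetherian for every open ideal I (pro-Noetherian), and let J ⊆ A be an open ideal all of whose elements are topologically nilpotent. Then for every open ideal V of A there exists n ∈ ℕ with J^n ⊆ V. -/
open Filter

/-- Let `A` be a complete linearly topologized ring such that `A ⧸ I` is
Noetherian for every open ideal `I` (pro-Noetherian), and let `J ⊆ A` be an
open ideal all of whose elements are topologically nilpotent.  Then for every
open ideal `V` of `A` there exists `n ∈ ℕ` with `Jⁿ ⊆ V`. -/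
theorem stmt_7 {A : Type*} [CommRing A] [UniformSpace A] [IsUniformAddGroup A]
    [IsTopologicalRing A] [CompleteSpace A]
    (hlin : ∀ s ∈ nhds (0 : A), ∃ I : Ideal A, (I : Set A) ∈ nhds (0 : A) ∧ (I : Set A) ⊆ s)
    (hNoeth : ∀ I : Ideal A, (I : Set A) ∈ nhds (0 : A) → IsNoetherianRing (A ⧸ I))
    (J : Ideal A) (hJopen : (J : Set A) ∈ nhds (0 : A))
    (hJnil : ∀ a ∈ J, Tendsto (fun n : ℕ => a ^ n) atTop (nhds 0)) :
    ∀ V : Ideal A, (V : Set A) ∈ nhds (0 : A) → ∃ n : ℕ, J ^ n ≤ V := by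
  intro V hV
  haveI := hNoeth V hV
  set f := Ideal.Quotient.mk V with hf
  -- The image of J in A ⧸ V consists of nilpotent elements
  have hle : J.map f ≤ nilradical (A ⧸ V) := by
    rw [Ideal.map, Ideal.span_le]
    rintro _ ⟨a, ha, rfl⟩
    obtain ⟨n, hn⟩ := ((hJnil a ha).eventually_mem hV).exists
    exact ⟨n, by rw [← map_pow]; exact Ideal.Quotient.eq_zero_iff_mem.mpr hn⟩
  have hfg : (J.map f).FG := IsNoetherian.noetherian _
  have hle' : J.map f ≤ Ideal.radical ⊥ := by
    simpa [nilradical] using hle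
  obtain ⟨n, hn⟩ := Ideal.exists_pow_le_of_le_radical_of_fg hle' hfg
  refine ⟨n, fun x hx => ?_⟩
  have : f x ∈ (J.map f) ^ n := by
    rw [← Ideal.map_pow]
    exact Ideal.mem_map_of_mem f hx
  have hx0 : f x = 0 := by simpa using hn this
  exact Ideal.Quotient.eq_zero_iff_mem.mp hx0
end

section
/- Let A be a complete adic ring, with ideal I such that (I^n) is a basis of open ideals, and suppose A/I^n is Noetherian for all n. Then A is Noetherian, and for every ideal of definition J of A, the topology on A equals the J-adic topology. -/
open MvPolynomial
open MvPolynomial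

theorem prodpow {A σ : Type*} [CommRing A] (I : Ideal A) (x : σ → A) (hx : ∀ i, x i ∈ I)
    (s : Finset σ) (d : σ → ℕ) : ∏ i ∈ s, x i ^ d i ∈ I ^ (∑ i ∈ s, d i) := by
  classical
  induction s using Finset.induction with
  | empty => simp [Ideal.one_eq_top]
  | insert _ _ hni ih =>
      rw [Finset.prod_insert hni, Finset.sum_insert hni, pow_add]
      exact Ideal.mul_mem_mul (Ideal.pow_mem_pow (hx _) _) ih

theorem evalmem {A σ : Type*} [CommRing A] (I : Ideal A) (x : σ → A) (hx : ∀ i, x i ∈ I)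
    {p : MvPolynomial σ A} {n : ℕ} (hp : p.IsHomogeneous n) : eval x p ∈ I ^ n := by
  rw [eval_eq]
  refine Ideal.sum_mem _ fun d hd => ?_
  have hdeg : ∑ i ∈ d.support, d i = n := by
    have := hp (mem_support_iff.mp hd)
    rwa [show (Finsupp.weight (1 : σ → ℕ)) = Finsupp.weight (fun _ => 1) from rfl, ← Finsupp.degree_eq_weight_one, Finsupp.degree_apply] at this
  exact hdeg ▸ Ideal.mul_mem_left _ _ (prodpow I x hx d.support d)

theorem evalmem' {A σ : Type*} [CommRing A] (I : Ideal A) (x : σ → A) (hx : ∀ i, x i ∈ I)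
    {p : MvPolynomial σ A} {n : ℕ} (hp : p.IsHomogeneous n)
    (hc : ∀ d, coeff d p ∈ I) : eval x p ∈ I ^ (n + 1) := by
  rw [eval_eq]
  refine Ideal.sum_mem _ fun d hd => ?_
  have hdeg : ∑ i ∈ d.support, d i = n := by
    have := hp (mem_support_iff.mp hd)
    rwa [show (Finsupp.weight (1 : σ → ℕ)) = Finsupp.weight (fun _ => 1) from rfl, ← Finsupp.degree_eq_weight_one, Finsupp.degree_apply] at this
  rw [pow_succ']
  exact Ideal.mul_mem_mul (hc d) (hdeg ▸ prodpow I x hx d.support d)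
open MvPolynomial

theorem exists_homog_eval {A σ : Type*} [CommRing A] {I : Ideal A} {x : σ → A}
    (hI : I = Ideal.span (Set.range x)) :
    ∀ n : ℕ, ∀ a ∈ I ^ n, ∃ p : MvPolynomial σ A, p.IsHomogeneous n ∧ eval x p = a := by
  intro n
  induction n with
  | zero => intro a _; exact ⟨C a, isHomogeneous_C _ _, eval_C _⟩
  | succ n ih =>
      intro a ha
      rw [pow_succ] at ha
      refine Submodule.mul_induction_on ha ?_ ?_
      · intro b hb c hc
        obtain ⟨p, hp, hep⟩ := ih b hb
        rw [hI] at hc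
        -- c ∈ span (range x): get homog 1 poly
        have h1 : ∃ q : MvPolynomial σ A, q.IsHomogeneous 1 ∧ eval x q = c := by
          refine Submodule.span_induction ?_ ?_ ?_ ?_ hc
          · rintro _ ⟨i, rfl⟩; exact ⟨X i, isHomogeneous_X _ _, eval_X _⟩
          · exact ⟨0, isHomogeneous_zero _ _ _, map_zero _⟩
          · rintro y z - - ⟨q, hq, hqe⟩ ⟨q', hq', hqe'⟩
            exact ⟨q + q', hq.add hq', by simp [hqe, hqe']⟩
          · rintro r y - ⟨q, hq, hqe⟩
            exact ⟨C r * q, by simpa using (isHomogeneous_C σ r).mul hq, by simp [hqe]⟩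
        obtain ⟨q, hq, hqe⟩ := h1
        exact ⟨p * q, hp.mul hq, by simp [hep, hqe]⟩
      · rintro y z ⟨p, hp, hpe⟩ ⟨q, hq, hqe⟩
        exact ⟨p + q, hp.add hq, by simp [hpe, hqe]⟩
open MvPolynomial

theorem exists_lift_homog {A σ : Type*} [CommRing A] (I : Ideal A)
    {q : MvPolynomial σ (A ⧸ I)} {n : ℕ} (hq : q.IsHomogeneous n) :
    ∃ p : MvPolynomial σ A, p.IsHomogeneous n ∧ map (Ideal.Quotient.mk I) p = q := by
  classical
  set π := Ideal.Quotient.mk I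
  have hπ : Function.Surjective π := Ideal.Quotient.mk_surjective
  set σ' : A ⧸ I → A := Function.surjInv hπ with hσ'
  refine ⟨∑ d ∈ q.support, monomial d (σ' (coeff d q)), ?_, ?_⟩
  · refine IsHomogeneous.sum _ _ _ fun d hd => ?_
    have : (Finsupp.weight 1) d = n := hq (mem_support_iff.mp hd)
    exact isHomogeneous_monomial _ (by rwa [Finsupp.degree_eq_weight_one])
  · rw [map_sum]
    conv_rhs => rw [q.as_sum]
    refine Finset.sum_congr rfl fun d _ => ?_
    rw [map_monomial, Function.surjInv_eq hπ]
open MvPolynomial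

theorem ishomog_degree {A σ : Type*} [CommRing A] {q : MvPolynomial σ A} {d : ℕ}
    (hq : q.IsHomogeneous d) {e : σ →₀ ℕ} (he : coeff e q ≠ 0) : e.degree = d := by
  rw [Finsupp.degree_eq_weight_one]; exact hq he

theorem degree_add' {σ : Type*} (a b : σ →₀ ℕ) : (a + b).degree = a.degree + b.degree := by
  simp [Finsupp.degree_eq_weight_one, map_add]

theorem hc_mul {A σ : Type*} [CommRing A] {q : MvPolynomial σ A} {d : ℕ}
    (hq : q.IsHomogeneous d) (h : MvPolynomial σ A) (n : ℕ) :
    homogeneousComponent n (h * q) =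
      if d ≤ n then homogeneousComponent (n - d) h * q else 0 := by
  classical
  ext α
  rw [coeff_homogeneousComponent]
  by_cases hdn : d ≤ n
  · rw [if_pos hdn, coeff_mul, coeff_mul]
    by_cases hα : α.degree = n
    · rw [if_pos hα]
      refine Finset.sum_congr rfl fun x hx => ?_
      rw [coeff_homogeneousComponent]
      by_cases hq0 : coeff x.2 q = 0
      · simp [hq0]
      · have hd2 : x.2.degree = d := ishomog_degree hq hq0
        have hx' : x.1 + x.2 = α := Finset.HasAntidiagonal.mem_antidiagonal.mp hx
        have : x.1.degree = n - d := by
          have : x.1.degree + x.2.degree = α.degree := by rw [← degree_add', hx']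
          omega
        rw [if_pos this]
    · rw [if_neg hα]
      refine (Finset.sum_eq_zero fun x hx => ?_).symm
      rw [coeff_homogeneousComponent]
      by_cases hq0 : coeff x.2 q = 0
      · simp [hq0]
      · have hd2 : x.2.degree = d := ishomog_degree hq hq0
        have hx' : x.1 + x.2 = α := Finset.HasAntidiagonal.mem_antidiagonal.mp hx
        have hne : ¬ x.1.degree = n - d := by
          intro h1
          apply hα
          have : x.1.degree + x.2.degree = α.degree := by rw [← degree_add', hx']
          omega
        rw [if_neg hne, zero_mul]
  · rw [if_neg hdn, coeff_zero]
    by_cases hα : α.degree = n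
    · rw [if_pos hα, coeff_mul]
      refine Finset.sum_eq_zero fun x hx => ?_
      by_cases hq0 : coeff x.2 q = 0
      · simp [hq0]
      · have hd2 : x.2.degree = d := ishomog_degree hq hq0
        have hx' : x.1 + x.2 = α := Finset.HasAntidiagonal.mem_antidiagonal.mp hx
        have : x.1.degree + x.2.degree = α.degree := by rw [← degree_add', hx']
        omega
    · rw [if_neg hα]


theorem smulTop {A : Type*} [CommRing A] (I : Ideal A) :
    (I • (⊤ : Submodule A A)) = I := by rw [smul_eq_mul, Ideal.mul_top]

theorem approx {A : Type*} [CommRing A] (I : Ideal A) [IsAdicComplete I A]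
    (J : Ideal A) {ι : Type*} [Fintype ι] (b : ι → A) (d : ι → ℕ)
    (hbJ : ∀ j, b j ∈ J)
    (key : ∀ n : ℕ, ∀ a ∈ J, a ∈ I ^ n → ∃ t : ι → A,
      (∀ j, t j ∈ I ^ (n - d j)) ∧ a - ∑ j, t j * b j ∈ I ^ (n + 1)) :
    J = Ideal.span (Set.range b) := by
  classical
  refine le_antisymm ?_ (Ideal.span_le.mpr (Set.range_subset_iff.mpr hbJ))
  intro a ha
  -- recursive construction of the approximating sequence
  let f : (n : ℕ) → {c : A // c ∈ J ∧ c ∈ I ^ n} := fun n => Nat.rec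
    ⟨a, ha, by simp [Ideal.one_eq_top]⟩
    (fun n prev =>
      ⟨prev.1 - ∑ j, (Classical.choose (key n prev.1 prev.2.1 prev.2.2)) j * b j,
       Ideal.sub_mem _ prev.2.1
         (Ideal.sum_mem _ fun j _ => Ideal.mul_mem_left _ _ (hbJ j)),
       (Classical.choose_spec (key n prev.1 prev.2.1 prev.2.2)).2⟩) n
  let tt : ℕ → ι → A := fun n => Classical.choose (key n (f n).1 (f n).2.1 (f n).2.2)
  have htt : ∀ n j, tt n j ∈ I ^ (n - d j) :=
    fun n => (Classical.choose_spec (key n (f n).1 (f n).2.1 (f n).2.2)).1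
  have hstep : ∀ n, (f (n+1)).1 = (f n).1 - ∑ j, tt n j * b j := fun n => rfl
  let s : ι → ℕ → A := fun j n => ∑ k ∈ Finset.range n, tt k j
  have htel : ∀ n, a = (f n).1 + ∑ j, s j n * b j := by
    intro n
    induction n with
    | zero => simp [s, f]
    | succ n ih =>
        rw [ih, hstep n]
        have : ∀ j, s j (n+1) = s j n + tt n j := fun j => Finset.sum_range_succ _ _
        simp only [this, add_mul, Finset.sum_add_distrib]
        ring
  -- partial sums of coefficients are Cauchy
  have hdiff : ∀ j (m n : ℕ), m ≤ n → s j n - s j m ∈ I ^ (m - d j) := by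
    intro j m n hmn
    rw [← Finset.sum_Ico_eq_sub _ hmn]
    refine Ideal.sum_mem _ fun k hk => ?_
    refine Ideal.pow_le_pow_right ?_ (htt k j)
    exact Nat.sub_le_sub_right (Finset.mem_Ico.mp hk).1 _
  have hlim : ∀ j : ι, ∃ L, ∀ n, s j (n + d j) ≡ L [SMOD (I ^ n • ⊤ : Submodule A A)] := by
    intro j
    refine IsPrecomplete.prec (inferInstance : IsPrecomplete I A) ?_
    intro m n hmn
    rw [SModEq.sub_mem, smulTop]
    have := hdiff j (m + d j) (n + d j) (by omega)
    have h' : -(s j (n + d j) - s j (m + d j)) ∈ I ^ m := neg_mem (by simpa using this)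
    simpa using h'
  choose β hβ using hlim
  have hfin : a - ∑ j, β j * b j = 0 := by
    refine IsHausdorff.haus (inferInstance : IsHausdorff I A) _ fun n => ?_
    rw [SModEq.zero, smulTop]
    set D := Finset.univ.sup d with hD
    set n' := n + D with hn'
    have hd' : ∀ j, d j ≤ D := fun j => Finset.le_sup (Finset.mem_univ j)
    have heq : a - ∑ j, β j * b j = (f n').1 + ∑ j, (s j n' - β j) * b j := by
      have h1 : ∑ j, (s j n' - β j) * b j = ∑ j, s j n' * b j - ∑ j, β j * b j := by
        rw [← Finset.sum_sub_distrib]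
        exact Finset.sum_congr rfl fun j _ => sub_mul _ _ _
      rw [h1]
      have := htel n'
      linear_combination this
    rw [heq]
    refine Ideal.add_mem _ (Ideal.pow_le_pow_right (by omega) (f n').2.2) ?_
    refine Ideal.sum_mem _ fun j _ => Ideal.mul_mem_right _ _ ?_
    have h2 : s j n' - s j (n + d j) ∈ I ^ n := by
      have := hdiff j (n + d j) n' (by have := hd' j; omega)
      simpa using this
    have h3 : β j - s j (n + d j) ∈ I ^ n := by
      have := hβ j n
      rw [SModEq.sub_mem, smulTop] at this
      simpa using (neg_mem this : _)
    have := Ideal.sub_mem _ h2 h3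
    simpa using this
  have : a = ∑ j, β j * b j := by linear_combination hfin
  rw [this]
  exact Ideal.sum_mem _ fun j _ =>
    Ideal.mul_mem_left _ _ (Ideal.subset_span (Set.mem_range_self j))

set_option maxHeartbeats 1000000 in
theorem Jfg {A : Type*} [CommRing A] (I : Ideal A) [IsAdicComplete I A]
    {r : ℕ} {x : Fin r → A} (hxI : ∀ i, x i ∈ I) (hIx : I = Ideal.span (Set.range x))
    (h1 : IsNoetherianRing (A ⧸ I))
    (J : Ideal A) : J.FG := by
  classical
  set π := Ideal.Quotient.mk I with hπdef
  set S : Set (MvPolynomial (Fin r) (A ⧸ I)) :=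
    { q | ∃ (n : ℕ) (p : MvPolynomial (Fin r) A), p.IsHomogeneous n ∧
        eval x p ∈ J ∧ eval x p ∈ I ^ n ∧ MvPolynomial.map π p = q } with hS
  -- a finite generating subset t ⊆ S of the leading ideal
  obtain ⟨t, htS, htspan⟩ : ∃ t : Finset (MvPolynomial (Fin r) (A ⧸ I)),
      (↑t : Set _) ⊆ S ∧ Ideal.span (↑t : Set _) = Ideal.span S := by
    obtain ⟨G, hG⟩ : (Ideal.span S).FG := (isNoetherianRing_iff_ideal_fg _).mp inferInstance _
    have hGS : ∀ g : {g // g ∈ G}, ∃ T : Finset (MvPolynomial (Fin r) (A ⧸ I)),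
        ↑T ⊆ S ∧ (g : MvPolynomial (Fin r) (A ⧸ I)) ∈ Ideal.span (↑T : Set _) := by
      intro g
      have : (g : MvPolynomial (Fin r) (A ⧸ I)) ∈ Ideal.span S := by
        rw [← hG]; exact Ideal.subset_span g.2
      exact Submodule.mem_span_finite_of_mem_span this
    choose T hT1 hT2 using hGS
    set t : Finset (MvPolynomial (Fin r) (A ⧸ I)) := G.attach.biUnion T with ht
    have hsub : (↑t : Set _) ⊆ S := by
      intro q hq
      simp only [ht, Finset.coe_biUnion, Set.mem_iUnion, Finset.mem_coe] at hq
      obtain ⟨g, -, hg⟩ := hq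
      exact hT1 g hg
    refine ⟨t, hsub, ?_⟩
    refine le_antisymm (Ideal.span_mono hsub) ?_
    rw [← hG, Ideal.span_le]
    intro g hg
    refine Submodule.span_mono ?_ (hT2 ⟨g, hg⟩)
    intro q hq
    simp only [ht, Finset.coe_biUnion, Set.mem_iUnion, Finset.mem_coe]
    exact ⟨⟨g, hg⟩, Finset.mem_attach _ _, hq⟩
  -- extract the data attached to each element of t
  have hdata : ∀ q : {q // q ∈ t}, ∃ (n : ℕ) (p : MvPolynomial (Fin r) A),
      p.IsHomogeneous n ∧ eval x p ∈ J ∧ eval x p ∈ I ^ n ∧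
      MvPolynomial.map π p = (q : MvPolynomial (Fin r) (A ⧸ I)) :=
    fun q => htS q.2
  choose nn pp hhom hbJ hbI hmap using hdata
  -- the candidate generators of J
  have hqhom : ∀ q : {q // q ∈ t},
      ((q : MvPolynomial (Fin r) (A ⧸ I))).IsHomogeneous (nn q) := by
    intro q; rw [← hmap q]; exact (hhom q).map π
  have hJeq : J = Ideal.span (Set.range fun q : {q // q ∈ t} => eval x (pp q)) := by
    refine approx I J (ι := {q // q ∈ t}) (fun q => eval x (pp q)) nn hbJ ?_
    intro n a haJ haI
    obtain ⟨p, hp, hep⟩ := exists_homog_eval hIx n a haI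
    have hpS : MvPolynomial.map π p ∈ Ideal.span (↑t : Set _) := by
      rw [htspan]
      exact Ideal.subset_span ⟨n, p, hp, hep ▸ haJ, hep ▸ haI, rfl⟩
    obtain ⟨h, -, hh⟩ := Submodule.mem_span_finset.mp hpS
    -- pass to degree-n homogeneous components
    have hid : MvPolynomial.map π p =
        ∑ q ∈ t.attach, if nn q ≤ n then
          homogeneousComponent (n - nn q) (h q.1) * (q : MvPolynomial (Fin r) (A ⧸ I))
        else 0 := by
      have h0 : MvPolynomial.map π p =
          homogeneousComponent n (MvPolynomial.map π p) := by
        rw [homogeneousComponent_of_mem ((mem_homogeneousSubmodule _ _).mpr (hp.map π))]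
        simp
      conv_lhs => rw [h0, ← hh]
      rw [← Finset.sum_attach t (fun q => h q • q), map_sum]
      exact Finset.sum_congr rfl fun q _ => by
        rw [smul_eq_mul, hc_mul (hqhom q) (h q.1) n]
    -- lift the cofactors to homogeneous polynomials over A
    have hlift : ∀ q : {q // q ∈ t}, ∃ H : MvPolynomial (Fin r) A,
        H.IsHomogeneous (n - nn q) ∧
        MvPolynomial.map π H = homogeneousComponent (n - nn q) (h q.1) :=
      fun q => exists_lift_homog I (homogeneousComponent_isHomogeneous (n - nn q) (h q.1))
    choose H hH1 hH2 using hlift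
    set D : MvPolynomial (Fin r) A :=
      p - ∑ q ∈ t.attach, if nn q ≤ n then H q * pp q else 0 with hD
    have hDhom : D.IsHomogeneous n := by
      refine hp.sub (IsHomogeneous.sum _ _ _ fun q _ => ?_)
      split
      · rename_i hle
        have := (hH1 q).mul (hhom q)
        rwa [Nat.sub_add_cancel hle] at this
      · exact isHomogeneous_zero _ _ _
    have hDmap : MvPolynomial.map π D = 0 := by
      rw [hD, map_sub, map_sum, hid]
      rw [sub_eq_zero]
      refine Finset.sum_congr rfl fun q _ => ?_
      rw [apply_ite (MvPolynomial.map π), map_mul, hH2, hmap, map_zero]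
    have hDcoeff : ∀ e, coeff e D ∈ I := by
      intro e
      have : coeff e (MvPolynomial.map π D) = 0 := by rw [hDmap]; simp
      rwa [coeff_map, hπdef, Ideal.Quotient.eq_zero_iff_mem] at this
    have hDeval : eval x D ∈ I ^ (n + 1) := evalmem' I x hxI hDhom hDcoeff
    refine ⟨fun q => if nn q ≤ n then eval x (H q) else 0, ?_, ?_⟩
    · intro q
      dsimp only
      split
      · exact evalmem I x hxI (hH1 q)
      · exact Submodule.zero_mem _
    · have : a - ∑ q, (if nn q ≤ n then eval x (H q) else 0) * eval x (pp q) =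
          eval x D := by
        rw [hD, map_sub, hep, map_sum, Finset.univ_eq_attach]
        congr 1
        refine Finset.sum_congr rfl fun q _ => ?_
        rw [apply_ite (eval x), map_mul, map_zero, ite_mul, zero_mul]
      rw [this]
      exact hDeval
  rw [hJeq]
  exact ⟨Finset.univ.image fun q => eval x (pp q), by
    rw [Finset.coe_image, Finset.coe_univ, Set.image_univ]⟩

theorem mulspan {A ι : Type*} [CommRing A] [Fintype ι] (K : Ideal A) (x : ι → A)
    {z : A} (hz : z ∈ K * Ideal.span (Set.range x)) :
    ∃ t : ι → A, (∀ j, t j ∈ K) ∧ z = ∑ j, t j * x j := by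
  refine Submodule.mul_induction_on hz ?_ ?_
  · intro c hc y hy
    obtain ⟨u, hu⟩ := Ideal.mem_span_range_iff_exists_fun.mp hy
    refine ⟨fun j => c * u j, fun j => Ideal.mul_mem_right _ _ hc, ?_⟩
    rw [← hu, Finset.mul_sum]
    exact Finset.sum_congr rfl fun j _ => (mul_assoc _ _ _).symm
  · rintro y z ⟨t, ht, rfl⟩ ⟨t', ht', rfl⟩
    exact ⟨fun j => t j + t' j, fun j => Ideal.add_mem _ (ht j) (ht' j),
      by rw [← Finset.sum_add_distrib]; exact Finset.sum_congr rfl fun j _ => (add_mul _ _ _).symm⟩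

theorem Igen {A : Type*} [CommRing A] (I : Ideal A) [IsAdicComplete I A]
    (h2 : IsNoetherianRing (A ⧸ I ^ 2)) :
    ∃ (r : ℕ) (x : Fin r → A), (∀ i, x i ∈ I) ∧ I = Ideal.span (Set.range x) := by
  classical
  -- generators of I mod I²
  have hfg : (I.map (Ideal.Quotient.mk (I ^ 2))).FG :=
    (isNoetherianRing_iff_ideal_fg _).mp h2 _
  obtain ⟨s, hs⟩ := hfg
  have hsurj : Function.Surjective (Ideal.Quotient.mk (I ^ 2)) := Ideal.Quotient.mk_surjective
  have hmem : ∀ g ∈ s, ∃ y ∈ I, Ideal.Quotient.mk (I ^ 2) y = g := by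
    intro g hg
    have : g ∈ I.map (Ideal.Quotient.mk (I ^ 2)) := by
      rw [← hs]; exact Ideal.subset_span hg
    exact (Ideal.mem_map_iff_of_surjective _ hsurj).mp this
  choose y hyI hy using hmem
  let r := s.card
  let e : Fin r ≃ {g // g ∈ s} := (Fintype.equivFinOfCardEq (by simp [r])).symm
  let x : Fin r → A := fun i => y (e i).1 (e i).2
  have hxI : ∀ i, x i ∈ I := fun i => hyI _ _
  refine ⟨r, x, hxI, ?_⟩
  have hsub : I ≤ Ideal.span (Set.range x) ⊔ I ^ 2 := by
    intro a ha
    have hmk : Ideal.Quotient.mk (I ^ 2) a ∈ Ideal.span (↑s : Set (A ⧸ I ^ 2)) := by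
      rw [hs]; exact Ideal.mem_map_of_mem _ ha
    obtain ⟨c, -, hc⟩ := Submodule.mem_span_finset.mp hmk
    -- lift the coefficients
    choose cl hcl using fun g => hsurj (c g)
    have key : Ideal.Quotient.mk (I ^ 2) (∑ g ∈ s.attach, cl g.1 * x (e.symm g)) =
        Ideal.Quotient.mk (I ^ 2) a := by
      rw [map_sum]
      rw [← hc, ← Finset.sum_attach s (fun g => c g • g)]
      refine Finset.sum_congr rfl fun g _ => ?_
      have hx : x (e.symm g) = y g.1 g.2 := by simp [x, e.symm_apply_apply]  -- ?
      rw [map_mul, hcl, hx, hy g.1 g.2, smul_eq_mul]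
    have : a - ∑ g ∈ s.attach, cl g.1 * x (e.symm g) ∈ I ^ 2 := by
      rw [← Ideal.Quotient.eq_zero_iff_mem, map_sub, key, sub_self]
    refine Submodule.mem_sup.mpr ⟨∑ g ∈ s.attach, cl g.1 * x (e.symm g), ?_,
      a - ∑ g ∈ s.attach, cl g.1 * x (e.symm g), this, by ring⟩
    exact Ideal.sum_mem _ fun g _ => Ideal.mul_mem_left _ _
      (Ideal.subset_span (Set.mem_range_self _))
  -- now apply approx with J = I
  refine approx I I x (fun _ => 1) hxI ?_
  intro n a haJ haI
  cases n with
  | zero =>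
      exact ⟨0, fun j => by simp [Ideal.one_eq_top],
        by simpa using haJ⟩
  | succ m =>
      have hmem : a ∈ I ^ m * Ideal.span (Set.range x) ⊔ I ^ (m + 2) := by
        have h1 : a ∈ I ^ m * I := by rw [← pow_succ]; exact haI
        have h2 : I ^ m * I ≤ I ^ m * (Ideal.span (Set.range x) ⊔ I ^ 2) :=
          Ideal.mul_mono_right hsub
        have h3 := h2 h1
        rwa [Submodule.mul_sup, ← pow_add] at h3
      obtain ⟨yy, hyy, z, hz, hsum⟩ := Submodule.mem_sup.mp hmem
      obtain ⟨t, ht, rfl⟩ := mulspan (I ^ m) x hyy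
      refine ⟨t, fun j => by simpa using ht j, ?_⟩
      have : a - ∑ j, t j * x j = z := by linear_combination -hsum
      rw [this]
      exact hz


theorem mainNoeth {A : Type*} [CommRing A] (I : Ideal A) [IsAdicComplete I A]
    (hNoeth : ∀ n : ℕ, IsNoetherianRing (A ⧸ I ^ n)) : IsNoetherianRing A := by
  obtain ⟨r, x, hxI, hIx⟩ := Igen I (hNoeth 2)
  have h1 : IsNoetherianRing (A ⧸ I) := by
    have := hNoeth 1; rwa [pow_one] at this
  rw [isNoetherianRing_iff_ideal_fg]
  exact fun J => Jfg I hxI hIx h1 J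

/-- Let `A` be a complete adic ring, with ideal `I` such that `(Iⁿ)` is a basis
of open ideals, and suppose `A ⧸ Iⁿ` is Noetherian for all `n`.  Then `A` is
Noetherian, and for every ideal of definition `J` of `A` (an open ideal all of
whose elements are topologically nilpotent), the topology of `A` equals the
`J`-adic topology, i.e. the filtrations `(Iⁿ)` and `(Jⁿ)` are mutually
cofinal. -/
theorem stmt_8 {A : Type*} [CommRing A] (I : Ideal A) [IsAdicComplete I A]
    (hNoeth : ∀ n : ℕ, IsNoetherianRing (A ⧸ I ^ n)) :
    IsNoetherianRing A ∧
    ∀ J : Ideal A,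
      (∃ n : ℕ, I ^ n ≤ J) →
      (∀ a ∈ J, ∀ n : ℕ, ∃ m : ℕ, a ^ m ∈ I ^ n) →
      (∀ n : ℕ, ∃ m : ℕ, J ^ m ≤ I ^ n) ∧ (∀ n : ℕ, ∃ m : ℕ, I ^ m ≤ J ^ n) := by
  have hA : IsNoetherianRing A := mainNoeth I hNoeth
  refine ⟨hA, fun J hopen htop => ⟨?_, ?_⟩⟩
  · intro n
    have hrad : J ≤ (I ^ n).radical := fun a ha =>
      Ideal.mem_radical_iff.mpr (htop a ha n)
    exact Ideal.exists_pow_le_of_le_radical_of_fg hrad (IsNoetherian.noetherian J)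
  · intro n
    obtain ⟨k, hk⟩ := hopen
    exact ⟨k * n, by rw [pow_mul]; exact Ideal.pow_right_mono hk n⟩
end

section
/- Let (A, 𝔪) be a Noetherian complete local ring with the 𝔪-adic topology, and let (I_d) be a directed family of ideals with ⋂_d I_d = 0 such that each I_d is open in the 𝔪-adic topology. Then the (I_d)-topology coincides with the 𝔪-adic topology: for every n there exists d with I_d ⊆ 𝔪^n. -/
open IsLocalRing

private lemma artinian_quot_pow {A : Type*} [CommRing A] [IsNoetherianRing A] [IsLocalRing A]
    (k : ℕ) : IsArtinian A (A ⧸ (maximalIdeal A ^ k : Ideal A)) := by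
  induction k with
  | zero =>
    have : Subsingleton (A ⧸ (maximalIdeal A ^ 0 : Ideal A)) := by
      rw [pow_zero, Ideal.one_eq_top]
      exact Submodule.Quotient.subsingleton_iff.mpr rfl
    exact isArtinian_of_finite
  | succ k ih =>
    set m : Ideal A := maximalIdeal A
    have hle : m ^ (k + 1) ≤ m ^ k := Ideal.pow_le_pow_right (Nat.le_succ k)
    set N : Submodule A (A ⧸ (m ^ (k+1) : Ideal A)) :=
      Submodule.map (m ^ (k+1) : Ideal A).mkQ (m ^ k : Ideal A) with hN
    have htor : Module.IsTorsionBySet A N (m : Set A) := by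
      rintro ⟨x, hx⟩ ⟨a, ha⟩
      obtain ⟨y, hy, rfl⟩ := Submodule.mem_map.mp hx
      apply Subtype.ext
      show a • (m ^ (k+1) : Ideal A).mkQ y = 0
      rw [← map_smul, Submodule.mkQ_apply, Submodule.Quotient.mk_eq_zero]
      have : a * y ∈ m ^ (k + 1) := by
        rw [pow_succ']
        exact Ideal.mul_mem_mul ha hy
      simpa [smul_eq_mul] using this
    letI : Module (A ⧸ m) N := htor.module
    haveI : IsScalarTower A (A ⧸ m) N := htor.isScalarTower
    haveI : Module.Finite A N := by
      rw [Module.Finite.iff_fg]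
      exact (IsNoetherian.noetherian _).map _
    haveI : Module.Finite (A ⧸ m) N := Module.Finite.of_restrictScalars_finite A _ _
    haveI : m.IsMaximal := maximalIdeal.isMaximal A
    letI : Field (A ⧸ m) := Ideal.Quotient.field m
    haveI : IsArtinian (A ⧸ m) N := isArtinian_of_fg_of_artinian'
    haveI hartN : IsArtinian A N := by
      rw [isArtinian_iff]
      let e : Submodule A N ↪o Submodule (A ⧸ m) N :=
        { toFun := fun p =>
            { carrier := p
              add_mem' := fun h1 h2 => p.add_mem h1 h2
              zero_mem' := p.zero_mem
              smul_mem' := by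
                rintro s x hx
                obtain ⟨a, rfl⟩ := Ideal.Quotient.mk_surjective s
                exact p.smul_mem a hx }
          inj' := fun p q h => by
            ext x
            simpa using SetLike.ext_iff.mp h x
          map_rel_iff' := Iff.rfl }
      exact e.ltEmbedding.wellFounded (isArtinian_iff _ _ |>.mp ‹IsArtinian (A ⧸ m) N›)
    refine (isArtinian_iff_submodule_quotient N).mpr ⟨hartN, ?_⟩
    haveI := ih
    exact isArtinian_of_linearEquiv
      (Submodule.quotientQuotientEquivQuotient _ _ hle).symm

private lemma exists_min_image {A : Type*} [CommRing A] [IsNoetherianRing A] [IsLocalRing A]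
    {ι : Type*} [Nonempty ι] (I : ι → Ideal A)
    (hdir : ∀ d e : ι, ∃ c, I c ≤ I d ∧ I c ≤ I e) (k : ℕ) :
    ∃ e, ∀ d, I e ⊔ maximalIdeal A ^ k ≤ I d ⊔ maximalIdeal A ^ k := by
  haveI := artinian_quot_pow (A := A) k
  set m : Ideal A := maximalIdeal A
  set π := (m ^ k : Ideal A).mkQ with hπ
  obtain ⟨M0, ⟨e, he⟩, hmin⟩ :=
    IsArtinian.set_has_minimal
      (Set.range (fun d => Submodule.map π ((I d ⊔ m ^ k : Ideal A) : Submodule A A)))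
      (Set.range_nonempty _)
  simp only [] at he
  refine ⟨e, fun d => ?_⟩
  obtain ⟨c, hcd, hce⟩ := hdir d e
  have h1 : Submodule.map π ((I c ⊔ m ^ k : Ideal A) : Submodule A A) ≤ M0 :=
    he ▸ Submodule.map_mono (sup_le_sup_right hce _)
  have h2 : Submodule.map π ((I c ⊔ m ^ k : Ideal A) : Submodule A A) = M0 :=
    h1.lt_or_eq.resolve_left (hmin _ ⟨c, rfl⟩)
  have h3 : M0 ≤ Submodule.map π ((I d ⊔ m ^ k : Ideal A) : Submodule A A) :=
    h2 ▸ Submodule.map_mono (sup_le_sup_right hcd _)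
  have h4 : Submodule.map π ((I e ⊔ m ^ k : Ideal A) : Submodule A A) ≤
      Submodule.map π ((I d ⊔ m ^ k : Ideal A) : Submodule A A) := he ▸ h3
  have h5 := Submodule.comap_mono (f := π) h4
  rw [Submodule.comap_map_eq, Submodule.comap_map_eq, Submodule.ker_mkQ] at h5
  calc (I e ⊔ m ^ k : Ideal A) ≤ (I e ⊔ m ^ k) ⊔ m ^ k := le_sup_left
    _ ≤ (I d ⊔ m ^ k) ⊔ m ^ k := h5
    _ ≤ I d ⊔ m ^ k := by simp [sup_assoc]

/-- Let `(A, 𝔪)` be a Noetherian complete local ring with the `𝔪`-adic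
topology, and `(I d)` a directed family of ideals with `⋂ I d = 0` such that
each `I d` is open in the `𝔪`-adic topology.  Then the `(I d)`-topology
coincides with the `𝔪`-adic topology: for every `n` there exists `d` with
`I d ⊆ 𝔪ⁿ`. -/
theorem stmt_10 {A : Type*} [CommRing A] [IsNoetherianRing A] [IsLocalRing A]
    [IsAdicComplete (maximalIdeal A) A]
    {ι : Type*} [Nonempty ι] (I : ι → Ideal A)
    (hdir : ∀ d e : ι, ∃ c, I c ≤ I d ∧ I c ≤ I e)
    (hinter : (⨅ d, I d) = ⊥)
    (hopen : ∀ d, ∃ m : ℕ, maximalIdeal A ^ m ≤ I d) :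
    ∀ n : ℕ, ∃ d, I d ≤ maximalIdeal A ^ n := by
  intro n
  by_contra hcon
  push_neg at hcon
  set m : Ideal A := maximalIdeal A with hm
  choose dd hdd using fun k => exists_min_image I hdir k
  have hstep : ∀ (k : ℕ) (a : A), a ∈ I (dd k) → ∃ b, b ∈ I (dd (k+1)) ∧ a - b ∈ m ^ k := by
    intro k a ha
    have hmem : a ∈ I (dd (k+1)) ⊔ m ^ k :=
      hdd k (dd (k+1)) (Submodule.mem_sup_left ha)
    obtain ⟨y, hy, z, hz, hyz⟩ := Submodule.mem_sup.mp hmem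
    exact ⟨y, hy, by rw [← hyz]; simpa using hz⟩
  choose F hF1 hF2 using hstep
  obtain ⟨a0, ha0I, ha0m⟩ := SetLike.not_le_iff_exists.mp (hcon (dd n))
  let x : (k : ℕ) → {a : A // a ∈ I (dd (n + k))} := fun k =>
    Nat.rec ⟨a0, ha0I⟩ (fun k p => ⟨F (n + k) p.1 p.2, hF1 (n + k) p.1 p.2⟩) k
  have hxdiff : ∀ k, (x k).1 - (x (k+1)).1 ∈ m ^ (n + k) := fun k =>
    hF2 (n + k) (x k).1 (x k).2
  have hxnot : ∀ k, (x k).1 ∉ m ^ n := by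
    intro k
    induction k with
    | zero => exact ha0m
    | succ k ih =>
      intro hmem
      apply ih
      have h1 : (x k).1 - (x (k+1)).1 ∈ m ^ n :=
        Ideal.pow_le_pow_right (Nat.le_add_right n k) (hxdiff k)
      simpa using add_mem h1 hmem
  have htel : ∀ k l, (x k).1 - (x (k + l)).1 ∈ m ^ (n + k) := by
    intro k l
    induction l with
    | zero => simp only [Nat.add_zero, sub_self]; exact (m ^ (n + k)).zero_mem
    | succ l ih =>
      have h2 : (x (k+l)).1 - (x (k+l+1)).1 ∈ m ^ (n + k) :=
        Ideal.pow_le_pow_right (by omega) (hxdiff (k+l))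
      have h3 := add_mem ih h2
      rw [sub_add_sub_cancel] at h3
      rw [show k + (l+1) = k + l + 1 by omega]; exact h3
  have hsm : ∀ i : ℕ, (m ^ i • ⊤ : Submodule A A) = m ^ i := by
    intro i; rw [smul_eq_mul, Ideal.mul_top]
  have hcauchy : ∀ {i j : ℕ}, i ≤ j →
      (x i).1 ≡ (x j).1 [SMOD (m ^ i • ⊤ : Submodule A A)] := by
    intro i j hij
    rw [SModEq.sub_mem, hsm i]
    obtain ⟨l, rfl⟩ := Nat.exists_eq_add_of_le hij
    exact Ideal.pow_le_pow_right (by omega) (htel i l)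
  obtain ⟨L, hL⟩ := IsPrecomplete.prec (IsAdicComplete.toIsPrecomplete) hcauchy
  have hLsub : ∀ k, (x k).1 - L ∈ m ^ k := by
    intro k
    have := hL k
    rwa [SModEq.sub_mem, hsm k] at this
  have hLmem : ∀ d, L ∈ I d := by
    intro d
    obtain ⟨md, hmd⟩ := hopen d
    have h1 : (x md).1 ∈ I d := by
      have h2 : (x md).1 ∈ I (dd (n + md)) ⊔ m ^ (n + md) := Submodule.mem_sup_left (x md).2
      have h3 := hdd (n + md) d h2
      have h4 : I d ⊔ m ^ (n + md) ≤ I d :=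
        sup_le le_rfl ((Ideal.pow_le_pow_right (by omega)).trans hmd)
      exact h4 h3
    have h5 : (x md).1 - L ∈ I d := hmd (hLsub md)
    simpa using sub_mem h1 h5
  have hL0 : L = 0 := by
    have : L ∈ (⨅ d, I d) := Submodule.mem_iInf _ |>.mpr hLmem
    rw [hinter] at this
    simpa using this
  have : (x n).1 ∈ m ^ n := by
    have := hLsub n
    rwa [hL0, sub_zero] at this
  exact hxnot n this
end

section
/- Let A be a Noetherian ring complete for the I-adic topology, let (I_d)_{d∈D} be a directed family of open ideals of A consisting of topologically nilpotent elements, and set B := lim_d A/I_d. Suppose B is adic (its topology, with basis Ker(B → A/I_d), equals a J-adic topology for some ideal J ⊆ B). Then the natural map A → B is surjective, and for every d the topology on B equals the (I_d^n B)_{n∈ℕ}-topology. -/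
set_option synthInstance.maxHeartbeats 1000000
set_option maxHeartbeats 1000000

/-- The projective limit `lim_d A ⧸ I d` of the quotients of `A` by a family of
ideals, realized as a subring of the product. -/
def limSubring {A : Type*} [CommRing A] {D : Type*} [Preorder D]
    (Id : D → Ideal A) : Subring (∀ d, A ⧸ Id d) where
  carrier := {x | ∀ ⦃d e : D⦄, d ≤ e → ∀ hle : Id e ≤ Id d,
    Ideal.Quotient.factor hle (x e) = x d}
  zero_mem' := by intro d e _ hle; simp
  one_mem' := by intro d e _ hle; simp
  add_mem' := by
    intro x y hx hy d e h hle
    simp only [Pi.add_apply, map_add, hx h hle, hy h hle]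
  mul_mem' := by
    intro x y hx hy d e h hle
    simp only [Pi.mul_apply, map_mul, hx h hle, hy h hle]
  neg_mem' := by
    intro x hx d e h hle
    simp only [Pi.neg_apply, map_neg, hx h hle]

/-- The natural ring homomorphism `A → lim_d A ⧸ I d`. -/
def limSubringHom {A : Type*} [CommRing A] {D : Type*} [Preorder D]
    (Id : D → Ideal A) : A →+* limSubring Id :=
  RingHom.codRestrict (Pi.ringHom fun d => Ideal.Quotient.mk (Id d)) _
    (fun a _ _ _ hle => Ideal.Quotient.factor_mk hle a)

/-- The kernel of the projection `lim_d A ⧸ I d → A ⧸ I d`; these ideals form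
the basis of open ideals of the limit topology. -/
def limKer {A : Type*} [CommRing A] {D : Type*} [Preorder D]
    (Id : D → Ideal A) (d : D) : Ideal (limSubring Id) :=
  RingHom.ker ((Pi.evalRingHom (fun d => A ⧸ Id d) d).comp (limSubring Id).subtype)

section Aux

variable {A : Type*} [CommRing A] {D : Type*} [Preorder D] (Id : D → Ideal A)

lemma lim_mem_limKer_iff {x : limSubring Id} {d : D} :
    x ∈ limKer Id d ↔ (x : ∀ d, A ⧸ Id d) d = 0 := Iff.rfl

lemma lim_coe_hom (a : A) (d : D) :
    ((limSubringHom Id a : limSubring Id) : ∀ d, A ⧸ Id d) d = Ideal.Quotient.mk (Id d) a := rfl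

lemma lim_compat (x : limSubring Id) {d e : D} (h : d ≤ e) (hle : Id e ≤ Id d) :
    Ideal.Quotient.factor hle ((x : ∀ d, A ⧸ Id d) e) = (x : ∀ d, A ⧸ Id d) d := x.2 h hle

lemma lim_coe_sub (x y : limSubring Id) (d : D) :
    ((x - y : limSubring Id) : ∀ d, A ⧸ Id d) d
      = (x : ∀ d, A ⧸ Id d) d - (y : ∀ d, A ⧸ Id d) d := rfl

lemma limKer_anti {d e : D} (h : d ≤ e) (hle : Id e ≤ Id d) :
    limKer Id e ≤ limKer Id d := by
  intro x hx
  rw [lim_mem_limKer_iff] at hx ⊢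
  rw [← lim_compat Id x h hle, hx, map_zero]

lemma lim_surjMod (x : limSubring Id) (e : D) :
    ∃ a : A, x - limSubringHom Id a ∈ limKer Id e := by
  obtain ⟨a, ha⟩ := Ideal.Quotient.mk_surjective ((x : ∀ d, A ⧸ Id d) e)
  refine ⟨a, ?_⟩
  rw [lim_mem_limKer_iff, lim_coe_sub, lim_coe_hom, ha, sub_self]

lemma lim_mapLift (P : Ideal A) {x : limSubring Id}
    (hx : x ∈ Ideal.map (limSubringHom Id) P) (e : D) :
    ∃ a ∈ P, x - limSubringHom Id a ∈ limKer Id e := by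
  refine Submodule.span_induction ?_ ?_ ?_ ?_ hx
  · rintro _ ⟨p, hp, rfl⟩
    exact ⟨p, hp, by rw [sub_self]; exact zero_mem _⟩
  · exact ⟨0, zero_mem _, by rw [map_zero, sub_zero]; exact zero_mem _⟩
  · rintro x y - - ⟨a, ha, hxa⟩ ⟨b, hb, hyb⟩
    refine ⟨a + b, add_mem ha hb, ?_⟩
    have : x + y - limSubringHom Id (a + b)
        = (x - limSubringHom Id a) + (y - limSubringHom Id b) := by
      rw [map_add]; ring
    rw [this]; exact add_mem hxa hyb
  · rintro b x - ⟨a, ha, hxa⟩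
    obtain ⟨c, hc⟩ := lim_surjMod Id b e
    refine ⟨c * a, Ideal.mul_mem_left _ _ ha, ?_⟩
    have : b • x - limSubringHom Id (c * a)
        = b * (x - limSubringHom Id a) + (b - limSubringHom Id c) * limSubringHom Id a := by
      rw [map_mul, smul_eq_mul]; ring
    rw [this]
    exact add_mem (Ideal.mul_mem_left _ _ hxa) (Ideal.mul_mem_right _ _ hc)

lemma lim_liftSmall [IsDirected D (· ≤ ·)] (hanti : ∀ ⦃d e : D⦄, d ≤ e → Id e ≤ Id d)
    {x : limSubring Id} {d : D} (hx : x ∈ limKer Id d) (e : D) :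
    ∃ a ∈ Id d, x - limSubringHom Id a ∈ limKer Id e := by
  obtain ⟨f, hdf, hef⟩ := directed_of (· ≤ ·) d e
  obtain ⟨a, ha⟩ := Ideal.Quotient.mk_surjective ((x : ∀ d, A ⧸ Id d) f)
  have haf : x - limSubringHom Id a ∈ limKer Id f := by
    rw [lim_mem_limKer_iff, lim_coe_sub, lim_coe_hom, ha, sub_self]
  refine ⟨a, ?_, limKer_anti Id hef (hanti hef) haf⟩
  rw [← Ideal.Quotient.eq_zero_iff_mem]
  have := lim_compat Id x hdf (hanti hdf)
  rw [← ha, Ideal.Quotient.factor_mk] at this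
  rw [this]
  exact hx

lemma lim_fact1 [IsDirected D (· ≤ ·)] (hanti : ∀ ⦃d e : D⦄, d ≤ e → Id e ≤ Id d)
    (d e : D) :
    limKer Id d ≤ Ideal.map (limSubringHom Id) (Id d) + limKer Id e := by
  intro x hx
  obtain ⟨a, ha, hk⟩ := lim_liftSmall Id hanti hx e
  have : x = limSubringHom Id a + (x - limSubringHom Id a) := by ring
  rw [this, Ideal.add_eq_sup]
  exact Submodule.add_mem_sup (Ideal.mem_map_of_mem _ ha) hk

lemma pow_add_le_pow_add {R : Type*} [CommRing R] (X K : Ideal R) (k : ℕ) :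
    (X + K) ^ k ≤ X ^ k + K := by
  induction k with
  | zero => simp
  | succ k ih =>
    calc (X + K) ^ (k + 1) = (X + K) ^ k * (X + K) := pow_succ _ _
    _ ≤ (X ^ k + K) * (X + K) := Ideal.mul_mono_left ih
    _ = X ^ k * X + (X ^ k * K + (K * X + K * K)) := by ring
    _ ≤ X ^ (k + 1) + K := by
        rw [← pow_succ]
        simp only [Ideal.add_eq_sup]
        exact sup_le_sup le_rfl
          (sup_le Ideal.mul_le_right (sup_le Ideal.mul_le_left Ideal.mul_le_right))

end Aux

/-- Let `A` be a Noetherian ring, complete for the `I`-adic topology, and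
`(I d)_{d ∈ D}` a directed family of open ideals of `A` consisting of
topologically nilpotent elements.  Set `B := lim_d A ⧸ I d`.  Suppose `B` is
adic: its topology, with basis `Ker (B → A ⧸ I d)`, equals a `J`-adic topology
for some ideal `J ⊆ B`.  Then the natural map `A → B` is surjective, and for
every `d` the topology on `B` equals the `(I dⁿ B)ₙ`-topology. -/




theorem stmt_11 {A : Type*} [CommRing A] [IsNoetherianRing A]
    (I : Ideal A) [IsAdicComplete I A]
    {D : Type*} [Preorder D] [IsDirected D (· ≤ ·)]
    (Id : D → Ideal A) (hanti : ∀ ⦃d e : D⦄, d ≤ e → Id e ≤ Id d)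
    (hopen : ∀ d, ∃ m : ℕ, I ^ m ≤ Id d)
    (hnil : ∀ d, ∀ a ∈ Id d, ∀ n : ℕ, ∃ m : ℕ, a ^ m ∈ I ^ n)
    (hadic : ∃ J : Ideal (limSubring Id),
      (∀ p : ℕ, ∃ d, limKer Id d ≤ J ^ p) ∧ (∀ d, ∃ p : ℕ, J ^ p ≤ limKer Id d)) :
    Function.Surjective (limSubringHom Id) ∧
    ∀ d, (∀ n : ℕ, ∃ e, limKer Id e ≤ Ideal.map (limSubringHom Id) (Id d ^ n)) ∧
      (∀ e, ∃ n : ℕ, Ideal.map (limSubringHom Id) (Id d ^ n) ≤ limKer Id e) := by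
  classical
  set φ := limSubringHom Id with hφ
  obtain ⟨J, hJ1, hJ2⟩ := hadic
  obtain ⟨e1, -⟩ := hJ1 0
  -- powers of the `Id d` eventually enter powers of `I`
  have hrad : ∀ d (n : ℕ), ∃ k : ℕ, Id d ^ k ≤ I ^ n := by
    intro d n
    refine Ideal.exists_pow_le_of_le_radical_of_fg (fun a ha => ?_)
      (IsNoetherian.noetherian _)
    exact Ideal.mem_radical_iff.mpr (hnil d a ha n)
  -- Lemma Q
  have hQ : ∀ n : ℕ, ∃ N : ℕ, n ≤ N ∧ ∀ e, J ^ N ≤ Ideal.map φ (I ^ n) + limKer Id e := by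
    intro n
    obtain ⟨p, hp⟩ := hJ2 e1
    obtain ⟨k, hk⟩ := hrad e1 n
    refine ⟨max (p * k) n, le_max_right _ _, fun e => ?_⟩
    calc J ^ max (p * k) n ≤ J ^ (p * k) := Ideal.pow_le_pow_right (le_max_left _ _)
    _ = (J ^ p) ^ k := pow_mul _ _ _
    _ ≤ (limKer Id e1) ^ k := Ideal.pow_right_mono hp k
    _ ≤ (Ideal.map φ (Id e1) + limKer Id e) ^ k :=
        Ideal.pow_right_mono (lim_fact1 Id hanti e1 e) k
    _ ≤ (Ideal.map φ (Id e1)) ^ k + limKer Id e := pow_add_le_pow_add _ _ _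
    _ ≤ Ideal.map φ (I ^ n) + limKer Id e := by
        rw [← Ideal.map_pow]
        exact add_le_add (Ideal.map_mono hk) le_rfl
  choose N hNge hQ' using hQ
  -- the step of the successive approximation
  have hstep : ∀ (n : ℕ) (x : limSubring Id), x ∈ J ^ N n →
      ∃ c ∈ I ^ n, x - φ c ∈ J ^ N (n + 1) := by
    intro n x hx
    obtain ⟨e, he⟩ := hJ1 (N (n + 1))
    have hx' := hQ' n e hx
    rw [Ideal.add_eq_sup, Submodule.mem_sup] at hx'
    obtain ⟨y, hy, z, hz, hyz⟩ := hx'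
    obtain ⟨a, haI, hya⟩ := lim_mapLift Id (I ^ n) hy e
    refine ⟨a, haI, ?_⟩
    have : x - φ a = (y - φ a) + z := by rw [← hyz]; ring
    rw [this]
    exact add_mem (he hya) (he hz)
  choose! st hstI hstJ using hstep
  -- master lemma
  have master : ∀ (j : ℕ) (x : limSubring Id), x ∈ J ^ N j → ∃ a ∈ I ^ j, φ a = x := by
    intro j x0 hx0
    set xs : ℕ → limSubring Id :=
      fun n => Nat.rec x0 (fun n x => x - φ (st (j + n) x)) n with hxs_def
    have xs_succ : ∀ n, xs (n + 1) = xs n - φ (st (j + n) (xs n)) := fun n => rfl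
    have hxs : ∀ n, xs n ∈ J ^ N (j + n) := by
      intro n
      induction n with
      | zero => exact hx0
      | succ n ih => exact hstJ (j + n) (xs n) ih
    set c : ℕ → A := fun n => st (j + n) (xs n) with hc_def
    have hc : ∀ n, c n ∈ I ^ (j + n) := fun n => hstI _ _ (hxs n)
    set s : ℕ → A := fun n => ∑ k ∈ Finset.range n, c k with hs_def
    have hphis : ∀ n, φ (s n) = x0 - xs n := by
      intro n
      induction n with
      | zero => simp only [hs_def]; rw [Finset.range_zero, Finset.sum_empty, map_zero]; exact (sub_self x0).symm
      | succ n ih =>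
        have : s (n + 1) = s n + c n := Finset.sum_range_succ _ _
        rw [this, map_add, ih, xs_succ]
        ring
    have hsI : ∀ n, s n ∈ I ^ j := by
      intro n
      refine Ideal.sum_mem _ fun k _ => ?_
      exact Ideal.pow_le_pow_right (Nat.le_add_right _ _) (hc k)
    have hcau : ∀ {m n : ℕ}, m ≤ n → s m ≡ s n [SMOD (I ^ m • ⊤ : Submodule A A)] := by
      intro m n hmn
      rw [SModEq.sub_mem, smul_eq_mul, Ideal.mul_top]
      have h1 : s n - s m = ∑ k ∈ Finset.Ico m n, c k := (Finset.sum_Ico_eq_sub _ hmn).symm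
      have h2 : s m - s n = -(s n - s m) := by ring
      rw [h2, h1]
      refine neg_mem (Ideal.sum_mem _ fun k hk => ?_)
      refine Ideal.pow_le_pow_right ?_ (hc k)
      exact le_trans (Finset.mem_Ico.mp hk).1 (Nat.le_add_left _ _)
    obtain ⟨a, ha⟩ := IsPrecomplete.prec (IsAdicComplete.toIsPrecomplete (I := I) (M := A)) hcau
    have hsub : ∀ n, s n - a ∈ I ^ n := by
      intro n
      have := ha n
      rwa [SModEq.sub_mem, smul_eq_mul, Ideal.mul_top] at this
    have haIj : a ∈ I ^ j := by
      have : a = s j - (s j - a) := by ring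
      rw [this]
      exact sub_mem (hsI j) (hsub j)
    refine ⟨a, haIj, ?_⟩
    -- show x0 - φ a ∈ limKer Id d for all d
    have hker : ∀ d, x0 - φ a ∈ limKer Id d := by
      intro d
      obtain ⟨m, hm⟩ := hopen d
      obtain ⟨p, hp⟩ := hJ2 d
      set n := max m p with hn
      have h1 : xs n ∈ limKer Id d := by
        refine hp ?_
        refine Ideal.pow_le_pow_right ?_ (hxs n)
        exact le_trans (le_max_right m p) (le_trans (Nat.le_add_left _ _) (hNge (j + n)))
      have h2 : φ (s n - a) ∈ limKer Id d := by
        rw [lim_mem_limKer_iff, lim_coe_hom, Ideal.Quotient.eq_zero_iff_mem]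
        refine hm (Ideal.pow_le_pow_right (le_max_left m p) ?_)
        exact hsub n
      have : x0 - φ a = xs n + φ (s n - a) := by
        rw [map_sub, hphis n]; ring
      rw [this]
      exact add_mem h1 h2
    have : x0 - φ a = 0 := by
      have hcoe : ((x0 - φ a : limSubring Id) : ∀ d, A ⧸ Id d) = 0 := by
        funext d
        exact (lim_mem_limKer_iff Id).mp (hker d)
      exact Subtype.ext (by rw [hcoe]; rfl)
    have := sub_eq_zero.mp this
    exact this.symm
  constructor
  · intro b
    obtain ⟨e, he⟩ := hJ1 (N 0)
    obtain ⟨a0, ha0⟩ := lim_surjMod Id b e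
    obtain ⟨a1, -, h1⟩ := master 0 _ (he ha0)
    exact ⟨a0 + a1, by rw [map_add, h1]; ring⟩
  · intro d
    obtain ⟨m, hm⟩ := hopen d
    refine ⟨fun n => ?_, fun e => ?_⟩
    · obtain ⟨e, he⟩ := hJ1 (N (m * n))
      refine ⟨e, fun x hx => ?_⟩
      obtain ⟨a, haI, rfl⟩ := master (m * n) x (he hx)
      refine Ideal.mem_map_of_mem _ ?_
      have : I ^ (m * n) = (I ^ m) ^ n := pow_mul _ _ _
      exact Ideal.pow_right_mono hm n (this ▸ haI)
    · obtain ⟨m', hm'⟩ := hopen e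
      obtain ⟨k, hk⟩ := hrad d m'
      refine ⟨k, ?_⟩
      rw [Ideal.map_le_iff_le_comap]
      intro a ha
      rw [Ideal.mem_comap, lim_mem_limKer_iff, lim_coe_hom, Ideal.Quotient.eq_zero_iff_mem]
      exact hm' (hk ha)
end

section
/- Let ω be an algebraic Pfaff form of degree m on ℙ²_ℂ, i.e. ω = ω₁ dx + ω₂ dy + ω₃ dz with ωᵢ homogeneous of degree m and xω₁ + yω₂ + zω₃ = 0. If f ∈ ℂ[[x,y,z]] is nonzero with lowest-degree homogeneous part f_n, and f divides ω ∧ df in the module of formal differential forms, then f_n divides ω ∧ df_n, i.e. the class of f_n is an algebraic solution of ω. -/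
open MvPolynomial

/-- The formal partial derivative `∂/∂xᵢ` on multivariate formal power
series. -/
noncomputable def mvpsPDeriv {σ : Type*} {R : Type*} [CommRing R] (i : σ)
    (f : MvPowerSeries σ R) : MvPowerSeries σ R :=
  fun s => ((s i + 1 : ℕ) : R) * f (s + Finsupp.single i 1)

lemma aux_deg_add (u v : Fin 3 →₀ ℕ) : (u + v).degree = u.degree + v.degree := by
  classical
  show (u + v).sum (fun _ e => e) = u.sum (fun _ e => e) + v.sum (fun _ e => e)
  exact Finsupp.sum_add_index' (fun _ => rfl) (fun _ _ _ => rfl)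

lemma aux_deg_single (b : Fin 3) : (Finsupp.single b 1).degree = 1 := by
  classical
  exact Finsupp.degree_single b 1

lemma aux_coeff_pderiv (i : Fin 3) (p : MvPolynomial (Fin 3) ℂ) (s : Fin 3 →₀ ℕ) :
    MvPolynomial.coeff s (pderiv i p)
      = ((s i + 1 : ℕ) : ℂ) * MvPolynomial.coeff (s + Finsupp.single i 1) p := by
  classical
  induction p using MvPolynomial.induction_on' with
  | add p q hp hq => simp [hp, hq, mul_add]
  | monomial u a =>
    rw [pderiv_monomial, coeff_monomial, coeff_monomial]
    by_cases h : u = s + Finsupp.single i 1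
    · subst h
      rw [if_pos (add_tsub_cancel_right _ _), if_pos rfl]
      have : ((s + Finsupp.single i 1 : Fin 3 →₀ ℕ)) i = s i + 1 := by
        rw [Finsupp.add_apply, Finsupp.single_eq_same]
      rw [this]
      push_cast
      ring
    · rw [if_neg h, mul_zero]
      by_cases h2 : u - Finsupp.single i 1 = s
      · have hui : u i = 0 := by
          by_contra hui
          apply h
          ext k
          have h2k : u k - (Finsupp.single i 1) k = s k := by
            rw [← Finsupp.tsub_apply, h2]
          rw [Finsupp.add_apply]
          by_cases hk : i = k
          · subst hk
            rw [Finsupp.single_eq_same] at h2k ⊢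
            omega
          · rw [Finsupp.single_eq_of_ne (Ne.symm hk)] at h2k ⊢
            omega
        rw [if_pos h2, hui]
        push_cast
        ring
      · rw [if_neg h2]

lemma aux_pderiv_hom (b : Fin 3) {p : MvPolynomial (Fin 3) ℂ} {k : ℕ}
    (hp : p.IsHomogeneous k) : (pderiv b p).IsHomogeneous (k - 1) := by
  intro d hd
  rw [aux_coeff_pderiv] at hd
  have h1 : MvPolynomial.coeff (d + Finsupp.single b 1) p ≠ 0 := by
    intro h; rw [h, mul_zero] at hd; exact hd rfl
  have h2 := hp h1
  rw [show Finsupp.weight (1 : Fin 3 → ℕ) = Finsupp.degree from Finsupp.degree_eq_weight_one.symm] at h2 ⊢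
  rw [aux_deg_add, aux_deg_single] at h2
  omega

/-- Let `ω = ω₁ dx + ω₂ dy + ω₃ dz` be an algebraic Pfaff form of degree `m` on
`ℙ²_ℂ`: the `ωᵢ` are homogeneous of degree `m` and `xω₁ + yω₂ + zω₃ = 0`.
If `f ∈ ℂ[[x,y,z]]` is nonzero with lowest-degree homogeneous part `fn` (of
degree `n`), and `f` divides `ω ∧ df` (componentwise), then `fn` divides
`ω ∧ d fn`: the class of `fn` is an algebraic solution of `ω`. -/
theorem stmt_15 (m : ℕ) (ω : Fin 3 → MvPolynomial (Fin 3) ℂ)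
    (hhom : ∀ i, (ω i).IsHomogeneous m)
    (hEuler : (X 0 * ω 0 + X 1 * ω 1 + X 2 * ω 2 : MvPolynomial (Fin 3) ℂ) = 0)
    (f : MvPowerSeries (Fin 3) ℂ) (n : ℕ) (fn : MvPolynomial (Fin 3) ℂ)
    (hfn : fn.IsHomogeneous n) (hfn0 : fn ≠ 0)
    (hlow : ∀ s : Fin 3 →₀ ℕ, (s.sum fun _ e => e) < n → MvPowerSeries.coeff s f = 0)
    (hpart : ∀ s : Fin 3 →₀ ℕ, (s.sum fun _ e => e) = n →
      MvPowerSeries.coeff s f = MvPolynomial.coeff s fn)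
    (hdvd : ∀ i j : Fin 3,
      f ∣ ((ω i : MvPowerSeries (Fin 3) ℂ) * mvpsPDeriv j f
            - (ω j : MvPowerSeries (Fin 3) ℂ) * mvpsPDeriv i f)) :
    ∀ i j : Fin 3, fn ∣ (ω i * pderiv j fn - ω j * pderiv i fn) := by
  classical
  intro i j
  have hlow' : ∀ s : Fin 3 →₀ ℕ, s.degree < n → MvPowerSeries.coeff s f = 0 :=
    fun s hs => hlow s hs
  have hpart' : ∀ s : Fin 3 →₀ ℕ, s.degree = n →
      MvPowerSeries.coeff s f = MvPolynomial.coeff s fn := fun s hs => hpart s hs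
  -- trivial case n = 0 : fn is a nonzero constant, hence a unit
  rcases Nat.eq_zero_or_pos n with hn | hn
  · subst hn
    have hc : fn = C (MvPolynomial.coeff 0 fn) := by
      ext d
      by_cases hd : d = 0
      · subst hd; simp
      · rw [hfn.coeff_eq_zero (by rwa [Ne, Finsupp.degree_eq_zero_iff]), coeff_C,
          if_neg (fun h => hd h.symm)]
    have hz : ω i * pderiv j fn - ω j * pderiv i fn = 0 := by
      rw [hc, pderiv_C, pderiv_C, mul_zero, mul_zero, sub_zero]
    rw [hz]
    exact dvd_zero _
  -- trivial case m = 0 : the Euler relation forces ω = 0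
  rcases Nat.eq_zero_or_pos m with hm | hm
  · subst hm
    have hωC : ∀ k, ω k = C (MvPolynomial.coeff 0 (ω k)) := by
      intro k
      ext d
      by_cases hd : d = 0
      · subst hd; simp
      · rw [(hhom k).coeff_eq_zero (by rwa [Ne, Finsupp.degree_eq_zero_iff]), coeff_C,
          if_neg (fun h => hd h.symm)]
    have hz : ∀ k : Fin 3, ω k = 0 := by
      have h0 := congrArg (eval (Pi.single (0 : Fin 3) (1 : ℂ))) hEuler
      have h1 := congrArg (eval (Pi.single (1 : Fin 3) (1 : ℂ))) hEuler
      have h2 := congrArg (eval (Pi.single (2 : Fin 3) (1 : ℂ))) hEuler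
      rw [hωC 0, hωC 1, hωC 2] at h0 h1 h2
      simp only [map_add, map_mul, eval_X, eval_C, map_zero, Pi.single_apply] at h0 h1 h2
      have e20 : ¬((2 : Fin 3) = 0) := by decide
      have e21 : ¬((2 : Fin 3) = 1) := by decide
      have e02 : ¬((0 : Fin 3) = 2) := by decide
      have e12 : ¬((1 : Fin 3) = 2) := by decide
      have e10 : ¬((1 : Fin 3) = 0) := by decide
      have e01 : ¬((0 : Fin 3) = 1) := by decide
      simp only [if_neg e20, if_neg e21, if_neg e02, if_neg e12, if_neg e10, if_neg e01,
        if_true, one_mul, zero_mul, add_zero, zero_add] at h0 h1 h2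
      intro k
      rw [hωC k]
      fin_cases k <;> simp [h0, h1, h2]
    rw [hz i, hz j]
    simp
  -- main case
  obtain ⟨h, hfh⟩ := hdvd i j
  -- `Hp d` : the degree-`d` homogeneous component of `h`, as a polynomial
  set Hp : ℕ → MvPolynomial (Fin 3) ℂ := fun d =>
    ∑ v ∈ Finset.finsuppAntidiag (Finset.univ : Finset (Fin 3)) d,
      monomial v (MvPowerSeries.coeff v h) with hHpdef
  have hdeguniv : ∀ v : Fin 3 →₀ ℕ, ∑ k, v k = v.degree := by
    intro v
    exact (Finset.sum_subset (Finset.subset_univ v.support)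
      (fun x _ hx => Finsupp.notMem_support_iff.mp hx)).symm
  have hHp : ∀ d (v : Fin 3 →₀ ℕ), MvPolynomial.coeff v (Hp d)
      = if v.degree = d then MvPowerSeries.coeff v h else 0 := by
    intro d v
    rw [hHpdef]
    simp only [MvPolynomial.coeff_sum, coeff_monomial]
    rw [Finset.sum_ite_eq' (Finset.finsuppAntidiag Finset.univ d) v
      (fun v' => MvPowerSeries.coeff v' h)]
    by_cases hvd : v.degree = d
    · rw [if_pos hvd, if_pos]
      rw [Finset.mem_finsuppAntidiag]
      exact ⟨by rw [hdeguniv v, hvd], Finset.subset_univ _⟩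
    · rw [if_neg hvd, if_neg]
      rw [Finset.mem_finsuppAntidiag]
      rintro ⟨h1, -⟩
      exact hvd (by rw [← hdeguniv v]; exact h1)
  -- vanishing of low-order coefficients of `ω ∧ df`
  have K1 : ∀ (a b : Fin 3) (s : Fin 3 →₀ ℕ), s.degree + 1 < m + n →
      MvPowerSeries.coeff s ((ω a : MvPowerSeries (Fin 3) ℂ) * mvpsPDeriv b f) = 0 := by
    intro a b s hs
    rw [MvPowerSeries.coeff_mul]
    apply Finset.sum_eq_zero
    rintro ⟨u, v⟩ huv
    dsimp only
    rw [Finset.HasAntidiagonal.mem_antidiagonal] at huv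
    have hsum : u.degree + v.degree = s.degree := by rw [← aux_deg_add, huv]
    by_cases hu : u.degree = m
    · have hv : (v + Finsupp.single b 1).degree < n := by
        rw [aux_deg_add, aux_deg_single]; omega
      have hz : MvPowerSeries.coeff v (mvpsPDeriv b f) = 0 := by
        have h0 : f (v + Finsupp.single b 1) = 0 := hlow' _ hv
        show ((v b + 1 : ℕ) : ℂ) * f (v + Finsupp.single b 1) = 0
        rw [h0, mul_zero]
      rw [hz, mul_zero]
    · rw [MvPolynomial.coeff_coe, (hhom a).coeff_eq_zero hu, zero_mul]
  -- comparison of coefficients of `fn * Hp d` with those of `f * h`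
  have K2 : ∀ d : ℕ, (∀ v : Fin 3 →₀ ℕ, v.degree < d → MvPowerSeries.coeff v h = 0) →
      ∀ s : Fin 3 →₀ ℕ,
        MvPowerSeries.coeff s ((fn : MvPowerSeries (Fin 3) ℂ) * (Hp d : MvPowerSeries (Fin 3) ℂ))
          = if s.degree = n + d then MvPowerSeries.coeff s (f * h) else 0 := by
    intro d hvan s
    by_cases hsd : s.degree = n + d
    · rw [if_pos hsd, MvPowerSeries.coeff_mul, MvPowerSeries.coeff_mul]
      apply Finset.sum_congr rfl
      rintro ⟨u, v⟩ huv
      dsimp only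
      rw [Finset.HasAntidiagonal.mem_antidiagonal] at huv
      have hsum : u.degree + v.degree = n + d := by rw [← aux_deg_add, huv, hsd]
      rcases lt_trichotomy u.degree n with h1 | h1 | h1
      · rw [MvPolynomial.coeff_coe, hfn.coeff_eq_zero (by omega), hlow' u h1, zero_mul, zero_mul]
      · have h2 : v.degree = d := by omega
        rw [MvPolynomial.coeff_coe, MvPolynomial.coeff_coe, hHp, if_pos h2, ← hpart' u h1]
      · have h2 : v.degree < d := by omega
        rw [MvPolynomial.coeff_coe (Hp d), hHp, if_neg (by omega), hvan v h2, mul_zero, mul_zero]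
    · rw [if_neg hsd, MvPowerSeries.coeff_mul]
      apply Finset.sum_eq_zero
      rintro ⟨u, v⟩ huv
      dsimp only
      rw [Finset.HasAntidiagonal.mem_antidiagonal] at huv
      have hsum : u.degree + v.degree = s.degree := by rw [← aux_deg_add, huv]
      by_cases hu : u.degree = n
      · rw [MvPolynomial.coeff_coe (Hp d), hHp, if_neg (by omega), mul_zero]
      · rw [MvPolynomial.coeff_coe, hfn.coeff_eq_zero hu, zero_mul]
  -- the order of `h` is at least `m - 1`
  have A : ∀ d : ℕ, d < m - 1 → ∀ v : Fin 3 →₀ ℕ, v.degree = d →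
      MvPowerSeries.coeff v h = 0 := by
    intro d
    induction d using Nat.strong_induction_on with
    | _ d IH =>
    intro hd v hv
    have hvan : ∀ w : Fin 3 →₀ ℕ, w.degree < d → MvPowerSeries.coeff w h = 0 :=
      fun w hw => IH w.degree hw (by omega) w rfl
    have hzero : (fn : MvPowerSeries (Fin 3) ℂ) * (Hp d : MvPowerSeries (Fin 3) ℂ) = 0 := by
      ext s
      rw [K2 d hvan s, MvPowerSeries.coeff_zero]
      split_ifs with hsd
      · rw [← hfh, map_sub, K1 i j s (by omega), K1 j i s (by omega), sub_zero]
      · rfl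
    have hpz : fn * Hp d = 0 := by
      rw [← MvPolynomial.coe_eq_zero_iff, MvPolynomial.coe_mul]
      exact hzero
    rcases mul_eq_zero.mp hpz with h1 | h1
    · exact absurd h1 hfn0
    · have h2 := hHp d v
      rw [h1, MvPolynomial.coeff_zero, if_pos hv] at h2
      exact h2.symm
  have hvanM : ∀ w : Fin 3 →₀ ℕ, w.degree < m - 1 → MvPowerSeries.coeff w h = 0 :=
    fun w hw => A w.degree hw w rfl
  -- relating the coefficients of `ω a * pderiv b fn` and `ω a * ∂_b f` in top degree
  have K3 : ∀ (a b : Fin 3) (s : Fin 3 →₀ ℕ), s.degree + 1 = m + n →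
      MvPolynomial.coeff s (ω a * pderiv b fn)
        = MvPowerSeries.coeff s ((ω a : MvPowerSeries (Fin 3) ℂ) * mvpsPDeriv b f) := by
    intro a b s hs
    rw [← MvPolynomial.coeff_coe, MvPolynomial.coe_mul, MvPowerSeries.coeff_mul,
      MvPowerSeries.coeff_mul]
    apply Finset.sum_congr rfl
    rintro ⟨u, v⟩ huv
    dsimp only
    rw [Finset.HasAntidiagonal.mem_antidiagonal] at huv
    have hsum : u.degree + v.degree = s.degree := by rw [← aux_deg_add, huv]
    by_cases hu : u.degree = m
    · congr 1
      have hvd : (v + Finsupp.single b 1).degree = n := by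
        rw [aux_deg_add, aux_deg_single]; omega
      have hp : f (v + Finsupp.single b 1)
          = MvPolynomial.coeff (v + Finsupp.single b 1) fn := hpart' _ hvd
      rw [MvPolynomial.coeff_coe, aux_coeff_pderiv]
      show _ = ((v b + 1 : ℕ) : ℂ) * f (v + Finsupp.single b 1)
      rw [hp]
    · rw [MvPolynomial.coeff_coe (pderiv b fn), MvPolynomial.coeff_coe,
        (hhom a).coeff_eq_zero hu, zero_mul, zero_mul]
  -- final identity
  have key : ((ω i * pderiv j fn - ω j * pderiv i fn : MvPolynomial (Fin 3) ℂ)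
        : MvPowerSeries (Fin 3) ℂ)
      = ((fn * Hp (m - 1) : MvPolynomial (Fin 3) ℂ) : MvPowerSeries (Fin 3) ℂ) := by
    rw [MvPolynomial.coe_mul]
    ext s
    rw [K2 (m - 1) hvanM s]
    by_cases hsd : s.degree = n + (m - 1)
    · rw [if_pos hsd, ← hfh, map_sub, MvPolynomial.coeff_coe, MvPolynomial.coeff_sub,
        K3 i j s (by omega), K3 j i s (by omega)]
    · rw [if_neg hsd, MvPolynomial.coeff_coe]
      have hg : (ω i * pderiv j fn - ω j * pderiv i fn).IsHomogeneous (m + (n - 1)) :=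
        ((hhom i).mul (aux_pderiv_hom j hfn)).sub ((hhom j).mul (aux_pderiv_hom i hfn))
      exact hg.coeff_eq_zero (by omega)
  exact ⟨Hp (m - 1), MvPolynomial.coe_inj.mp key⟩
end
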